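/- Let c : ℝ → ℂ be continuous and 2π-periodic with mean M₀, with e^{2πiM₀} ≠ 1, and suppose Im c(t) ≥ -η for all t, where η > 0. Let f be continuous 2π-periodic with sup norm ‖f‖_∞. Then the periodic solution u(t) = (e^{2πiM₀} - 1)^{-1} ∫₀^{2π} exp(i∫_t^{t+s} c(r)dr) f(t+s) ds of u' + icu = f satisfies the bound ‖u‖_∞ ≤ 2π e^{2πη} |e^{2πiM₀} - 1|^{-1} ‖f‖_∞. -/

import Mathlib

/-- Under the Hörmander condition `Im c ≥ -η` and the nonresonance condition
`e^{2πiM₀} ≠ 1`, the periodic solution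
`u(t) = (e^{2πiM₀} - 1)⁻¹ ∫₀^{2π} exp(i∫_t^{t+s} c) f(t+s) ds` of `u' + i c u = f`
satisfies `‖u‖_∞ ≤ 2π e^{2πη} |e^{2πiM₀} - 1|⁻¹ ‖f‖_∞`. -/
theorem apriori_bound_hormander (c f : ℝ → ℂ) (hc : Continuous c) (hf : Continuous f)
    (hcper : ∀ t, c (t + 2 * Real.pi) = c t) (hfper : ∀ t, f (t + 2 * Real.pi) = f t)
    (η : ℝ) (hη : 0 < η) (him : ∀ t, -η ≤ (c t).im)
    (M₀ : ℂ) (hM₀ : M₀ = ((2 * Real.pi : ℝ) : ℂ)⁻¹ * ∫ t in (0 : ℝ)..(2 * Real.pi), c t)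
    (hres : Complex.exp (((2 * Real.pi : ℝ) : ℂ) * Complex.I * M₀) ≠ 1)
    (u : ℝ → ℂ)
    (hu : ∀ t, u t = (Complex.exp (((2 * Real.pi : ℝ) : ℂ) * Complex.I * M₀) - 1)⁻¹ *
      ∫ s in (0 : ℝ)..(2 * Real.pi),
        Complex.exp (Complex.I * ((∫ r in t..(t + s), c r : ℂ))) * f (t + s)) :
    ∀ t, ‖u t‖ ≤
      2 * Real.pi * Real.exp (2 * Real.pi * η) *
        (‖Complex.exp (((2 * Real.pi : ℝ) : ℂ) * Complex.I * M₀) - 1‖)⁻¹ *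
        (⨆ s : ℝ, ‖f s‖) := by
  intro t
  have hπ : (0:ℝ) < 2 * Real.pi := by positivity
  -- boundedness of f
  have hper : Function.Periodic f (2 * Real.pi) := hfper
  have hbdd : Bornology.IsBounded (Set.range f) :=
    hper.isBounded_of_continuous hπ.ne' hf
  obtain ⟨C, hC⟩ := hbdd.exists_norm_le
  have hbdd2 : BddAbove (Set.range fun s => ‖f s‖) :=
    ⟨C, by rintro _ ⟨s, rfl⟩; exact hC _ (Set.mem_range_self s)⟩
  set Cf := ⨆ s : ℝ, ‖f s‖ with hCf
  have hfle : ∀ x, ‖f x‖ ≤ Cf := fun x => le_ciSup hbdd2 x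
  have hCf0 : 0 ≤ Cf := le_trans (norm_nonneg (f 0)) (hfle 0)
  -- bound for the integrand
  have key : ∀ s ∈ Set.uIoc (0:ℝ) (2 * Real.pi),
      ‖Complex.exp (Complex.I * ((∫ r in t..(t + s), c r : ℂ))) * f (t + s)‖ ≤
        Real.exp (2 * Real.pi * η) * Cf := by
    intro s hs
    rw [Set.uIoc_of_le hπ.le] at hs
    have hs0 : 0 ≤ s := hs.1.le
    have hs2 : s ≤ 2 * Real.pi := hs.2
    have him' : (∫ r in t..(t + s), c r : ℂ).im = ∫ r in t..(t + s), (c r).im := by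
      have := Complex.imCLM.intervalIntegral_comp_comm
        (hc.intervalIntegrable t (t + s) : IntervalIntegrable c MeasureTheory.volume t (t + s))
      simpa using this.symm
    have hlow : -η * s ≤ ∫ r in t..(t + s), (c r).im := by
      have h1 : (∫ r in t..(t + s), (-η : ℝ)) ≤ ∫ r in t..(t + s), (c r).im := by
        apply intervalIntegral.integral_mono_on (μ := MeasureTheory.volume) (by linarith)
          (intervalIntegrable_const (μ := MeasureTheory.volume) (c := (-η:ℝ)))
          ((Complex.continuous_im.comp hc).intervalIntegrable t (t + s))
        intro x _; exact him x
      simpa [mul_comm] using h1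
    have hre : (Complex.I * ((∫ r in t..(t + s), c r : ℂ))).re ≤ 2 * Real.pi * η := by
      have : (Complex.I * ((∫ r in t..(t + s), c r : ℂ))).re =
          -(∫ r in t..(t + s), c r : ℂ).im := by simp [Complex.mul_re]
      rw [this, him']
      nlinarith [hlow, hη.le]
    calc ‖Complex.exp (Complex.I * ((∫ r in t..(t + s), c r : ℂ))) * f (t + s)‖
        = Real.exp ((Complex.I * ((∫ r in t..(t + s), c r : ℂ))).re) *
            ‖f (t + s)‖ := by
          simp [Complex.norm_exp]
      _ ≤ Real.exp (2 * Real.pi * η) * Cf :=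
          mul_le_mul (Real.exp_le_exp.2 hre) (hfle _) (norm_nonneg _)
            (Real.exp_pos _).le
  have hint : ‖∫ s in (0:ℝ)..(2 * Real.pi),
      Complex.exp (Complex.I * ((∫ r in t..(t + s), c r : ℂ))) * f (t + s)‖ ≤
      Real.exp (2 * Real.pi * η) * Cf * |2 * Real.pi - 0| :=
    intervalIntegral.norm_integral_le_of_norm_le_const key
  rw [hu t]
  rw [norm_mul, norm_inv]
  have h2 : |2 * Real.pi - 0| = 2 * Real.pi := by
    rw [sub_zero]; exact abs_of_pos hπ
  rw [h2] at hint
  have hEinv : 0 ≤ (‖Complex.exp (((2 * Real.pi : ℝ) : ℂ) * Complex.I * M₀) - 1‖)⁻¹ :=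
    inv_nonneg.2 (norm_nonneg _)
  calc (‖Complex.exp (((2 * Real.pi : ℝ) : ℂ) * Complex.I * M₀) - 1‖)⁻¹ *
      ‖∫ s in (0:ℝ)..(2 * Real.pi),
        Complex.exp (Complex.I * ((∫ r in t..(t + s), c r : ℂ))) * f (t + s)‖
      ≤ (‖Complex.exp (((2 * Real.pi : ℝ) : ℂ) * Complex.I * M₀) - 1‖)⁻¹ *
        (Real.exp (2 * Real.pi * η) * Cf * (2 * Real.pi)) :=
        mul_le_mul_of_nonneg_left hint hEinv
    _ = 2 * Real.pi * Real.exp (2 * Real.pi * η) *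
        (‖Complex.exp (((2 * Real.pi : ℝ) : ℂ) * Complex.I * M₀) - 1‖)⁻¹ * Cf := by
        ring
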